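/- Under the hypotheses of the previous lemma (the five conditions hold with J ∉ {0, 12}, α, β, γ > 0, α+β+γ < 1, α1+β1+γ1 = 1 with α1, β1, γ1 ∈ [0,1]), none of α1, β1, γ1 equals 0 or 1. -/
import Mathlib


theorem alpha1_beta1_gamma1_interior (α β γ α1 β1 γ1 J A B C : ℝ)
    (hJ : J ≠ 12) (hJ0 : J ≠ 0)
    (hαpos : 0 < α) (hβpos : 0 < β) (hγpos : 0 < γ) (hsum : α + β + γ < 1)
    (hα1 : 0 ≤ α1 ∧ α1 ≤ 1) (hβ1 : 0 ≤ β1 ∧ β1 ≤ 1) (hγ1mem : 0 ≤ γ1 ∧ γ1 ≤ 1)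
    (hγ1 : α1 + β1 + γ1 = 1)
    (hA : A = α1 ^ 2 - α ^ 2) (hB : B = β1 ^ 2 - β ^ 2)
    (hC : C = γ1 ^ 2 - A - B - γ ^ 2)
    (hu1 : J * B ^ 2 = 12 * B * β1 ^ 2)
    (hu2 : 2 * J * B * C = 4 * ((1 - α1) * (1 - 6 * β1) * B
        + (1/2) * (1 - 2 * β1) * (1 - 3 * β1) * C))
    (hu3 : J * (2 * A * B + C ^ 2) = 4 * ((2 - 3 * β1) * (1 - β1) * A
        + (2 - 3 * α1) * (1 - α1) * B
        + (1/2) * ((2 - 3 * β1) * (1 - 2 * α1) + (2 - 3 * α1) * (1 - 2 * β1)) * C))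
    (hu4 : 2 * J * A * C = 4 * ((1 - β1) * (1 - 6 * α1) * A
        + (1/2) * (1 - 2 * α1) * (1 - 3 * α1) * C))
    (hu5 : J * A ^ 2 = 12 * A * α1 ^ 2) :
    α1 ≠ 0 ∧ α1 ≠ 1 ∧ β1 ≠ 0 ∧ β1 ≠ 1 ∧ γ1 ≠ 0 ∧ γ1 ≠ 1 := by
  have hα4 : (0:ℝ) < α ^ 4 := by positivity
  have hβ4 : (0:ℝ) < β ^ 4 := by positivity
  have hγ4 : (0:ℝ) < γ ^ 4 := by positivity
  -- helper: if α1 = 0 then J = 0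
  have key_a : α1 = 0 → False := by
    intro h
    apply hJ0
    have key : J * α ^ 4 = 0 := by
      subst hA h; linear_combination hu5
    exact (mul_eq_zero.mp key).resolve_right (ne_of_gt hα4)
  have key_b : β1 = 0 → False := by
    intro h
    apply hJ0
    have key : J * β ^ 4 = 0 := by
      subst hB h; linear_combination hu1
    exact (mul_eq_zero.mp key).resolve_right (ne_of_gt hβ4)
  have key_g : γ1 = 0 → False := by
    intro h
    apply hJ0
    have hb : β1 = 1 - α1 := by rw [h] at hγ1; linarith
    have key : J * γ ^ 4 = 0 := by
      subst hA hB hC h hb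
      linear_combination hu1 + hu2 + hu3 + hu4 + hu5
    exact (mul_eq_zero.mp key).resolve_right (ne_of_gt hγ4)
  refine ⟨fun h => key_a h, fun h => ?_, fun h => key_b h, fun h => ?_, fun h => key_g h,
    fun h => ?_⟩
  · exact key_b (by linarith [hβ1.1, hγ1mem.1])
  · exact key_a (by linarith [hα1.1, hγ1mem.1])
  · exact key_a (by linarith [hα1.1, hβ1.1])
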